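/- arXiv:2102.12688 — 2 statements merged into one kernel-verified Lean document; each statement's English description precedes it below -/
import Mathlib

section
/- For a real number $q$ with $q > 0$ and $q \ne 1$, for all nonnegative integers $n$ and $k$ and every positive integer $r$, $\binom{k+r-1}{k}_q H_n^{(k+r)}(q) = \binom{n+k}{n}_q H_{n+k}^{(r)}(q) - \binom{n+k+r-1}{n}_q H_k^{(r)}(q)$. -/
/-- The `q`-integer `[n]_q = (1 - q^n)/(1 - q)`. -/
noncomputable def qint (q : ℝ) (n : ℕ) : ℝ := (1 - q ^ n) / (1 - q)

/-- The `q`-factorial `[n]_q! = [n]_q [n-1]_q ⋯ [1]_q`, with `[0]_q! = 1`. -/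
noncomputable def qfact (q : ℝ) : ℕ → ℝ
  | 0 => 1
  | n + 1 => qint q (n + 1) * qfact q n

/-- The `q`-binomial coefficient `C(n,k)_q = [n]_q!/([k]_q! [n-k]_q!)`, equal to `0` for `k > n`. -/
noncomputable def qbinom (q : ℝ) (n k : ℕ) : ℝ :=
  if k ≤ n then qfact q n / (qfact q k * qfact q (n - k)) else 0

/-- The `q`-hyperharmonic numbers: `H_n^{(0)}(q) = 1/(q [n]_q)` and
`H_n^{(r)}(q) = ∑_{j=1}^n q^j H_j^{(r-1)}(q)` for `r ≥ 1` (so `H_0^{(r)}(q) = 0`). -/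
noncomputable def qhyp (q : ℝ) : ℕ → ℕ → ℝ
  | 0, n => 1 / (q * qint q n)
  | r + 1, n => ∑ j ∈ Finset.Icc 1 n, q ^ j * qhyp q r j

lemma qpow_ne_one {q : ℝ} (hq : 0 < q) (hq1 : q ≠ 1) {n : ℕ} (hn : n ≠ 0) : q ^ n ≠ 1 := by
  rcases lt_or_gt_of_ne hq1 with h | h
  · exact ne_of_lt (pow_lt_one₀ hq.le h hn)
  · exact ne_of_gt (one_lt_pow₀ h hn)

lemma qint_ne_zero {q : ℝ} (hq : 0 < q) (hq1 : q ≠ 1) {n : ℕ} (hn : n ≠ 0) :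
    qint q n ≠ 0 :=
  div_ne_zero (sub_ne_zero.mpr (Ne.symm (qpow_ne_one hq hq1 hn)))
    (sub_ne_zero.mpr (Ne.symm hq1))

lemma qfact_ne_zero {q : ℝ} (hq : 0 < q) (hq1 : q ≠ 1) : ∀ n, qfact q n ≠ 0
  | 0 => one_ne_zero
  | n + 1 => mul_ne_zero (qint_ne_zero hq hq1 (Nat.succ_ne_zero n)) (qfact_ne_zero hq hq1 n)

lemma qbinom_eq (q : ℝ) {n k : ℕ} (h : k ≤ n) :
    qbinom q n k = qfact q n / (qfact q k * qfact q (n - k)) := if_pos h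

lemma qbinom_self {q : ℝ} (hq : 0 < q) (hq1 : q ≠ 1) (n : ℕ) : qbinom q n n = 1 := by
  rw [qbinom_eq q le_rfl, Nat.sub_self]
  show qfact q n / (qfact q n * 1) = 1
  rw [mul_one, div_self (qfact_ne_zero hq hq1 n)]

lemma qhyp_succ_succ (q : ℝ) (r n : ℕ) :
    qhyp q (r + 1) (n + 1) = qhyp q (r + 1) n + q ^ (n + 1) * qhyp q r (n + 1) := by
  show (∑ j ∈ Finset.Icc 1 (n + 1), q ^ j * qhyp q r j) = _
  rw [Finset.sum_Icc_succ_top (Nat.succ_le_succ (Nat.zero_le n))]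
  rfl

lemma qhyp_zero_right (q : ℝ) (r : ℕ) : qhyp q (r + 1) 0 = 0 := by
  show (∑ j ∈ Finset.Icc 1 0, q ^ j * qhyp q r j) = 0
  simp

lemma qhyp_one_succ (q : ℝ) (m : ℕ) :
    qhyp q 1 (m + 1) = qhyp q 1 m + q ^ (m + 1) * (1 / (q * qint q (m + 1))) :=
  qhyp_succ_succ q 0 m

/-- Closed form: `H_n^{(s+1)}(q) = C(n+s, n)_q (H_{n+s}(q) - H_s(q))`. -/
lemma qhyp_closed {q : ℝ} (hq : 0 < q) (hq1 : q ≠ 1) :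
    ∀ s n : ℕ, qhyp q (s + 1) n = qbinom q (n + s) n * (qhyp q 1 (n + s) - qhyp q 1 s) := by
  intro s
  induction s with
  | zero =>
    intro n
    have h0 : qhyp q 1 0 = 0 := qhyp_zero_right q 0
    simp [h0, qbinom_self hq hq1]
  | succ s ih =>
    intro n
    induction n with
    | zero => simp [qhyp_zero_right]
    | succ n ihn =>
      rw [qhyp_succ_succ, ihn, ih (n + 1)]
      have e1 : n + 1 + s = n + s + 1 := by omega
      have e2 : n + 1 + (s + 1) = n + s + 2 := by omega
      have e3 : n + (s + 1) = n + s + 1 := by omega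
      rw [e1, e2, e3]
      rw [show (n + s + 2) = (n + s + 1) + 1 from rfl, qhyp_one_succ q (n + s + 1),
        qhyp_one_succ q s]
      rw [qbinom_eq q (show n ≤ n + s + 1 by omega),
        qbinom_eq q (show n + 1 ≤ n + s + 1 by omega),
        qbinom_eq q (show n + 1 ≤ n + s + 1 + 1 by omega),
        show n + s + 1 - n = s + 1 from by omega,
        show n + s + 1 - (n + 1) = s from by omega,
        show n + s + 1 + 1 - (n + 1) = s + 1 from by omega]
      rw [show qfact q (n + s + 1 + 1) = qint q (n + s + 2) * qfact q (n + s + 1) from rfl,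
        show qfact q (n + 1) = qint q (n + 1) * qfact q n from rfl,
        show qfact q (s + 1) = qint q (s + 1) * qfact q s from rfl]
      have hq0 : q ≠ 0 := ne_of_gt hq
      have h1q : (1 : ℝ) - q ≠ 0 := sub_ne_zero.mpr (Ne.symm hq1)
      have hA : qfact q (n + s + 1) ≠ 0 := qfact_ne_zero hq hq1 _
      have hB : qfact q n ≠ 0 := qfact_ne_zero hq hq1 _
      have hC : qfact q s ≠ 0 := qfact_ne_zero hq hq1 _
      have p1 : (1 : ℝ) - q ^ (n + s + 2) ≠ 0 :=
        sub_ne_zero.mpr (Ne.symm (qpow_ne_one hq hq1 (by omega)))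
      have p2 : (1 : ℝ) - q ^ (n + 1) ≠ 0 :=
        sub_ne_zero.mpr (Ne.symm (qpow_ne_one hq hq1 (by omega)))
      have p3 : (1 : ℝ) - q ^ (s + 1) ≠ 0 :=
        sub_ne_zero.mpr (Ne.symm (qpow_ne_one hq hq1 (by omega)))
      simp only [qint]
      field_simp
      ring

lemma qbinom_prod {q : ℝ} (hq : 0 < q) (hq1 : q ≠ 1) (n k s : ℕ) :
    qbinom q (n + k) n * qbinom q (n + k + s) (n + k) =
      qbinom q (k + s) k * qbinom q (n + k + s) n := by
  rw [qbinom_eq q (show n ≤ n + k by omega),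
    qbinom_eq q (show n + k ≤ n + k + s by omega),
    qbinom_eq q (show k ≤ k + s by omega),
    qbinom_eq q (show n ≤ n + k + s by omega),
    show n + k - n = k from by omega,
    show n + k + s - (n + k) = s from by omega,
    show k + s - k = s from by omega,
    show n + k + s - n = k + s from by omega]
  have h1 : qfact q n ≠ 0 := qfact_ne_zero hq hq1 _
  have h2 : qfact q k ≠ 0 := qfact_ne_zero hq hq1 _
  have h3 : qfact q s ≠ 0 := qfact_ne_zero hq hq1 _
  have h4 : qfact q (n + k) ≠ 0 := qfact_ne_zero hq hq1 _
  have h5 : qfact q (k + s) ≠ 0 := qfact_ne_zero hq hq1 _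
  field_simp

/-- For `q > 0`, `q ≠ 1`, all `n, k ≥ 0` and every `r ≥ 1`,
`C(k+r-1, k)_q H_n^{(k+r)}(q) = C(n+k, n)_q H_{n+k}^{(r)}(q) - C(n+k+r-1, n)_q H_k^{(r)}(q)`. -/
theorem qhyp_order_shift (q : ℝ) (hq : 0 < q) (hq1 : q ≠ 1) (n k r : ℕ) (hr : 1 ≤ r) :
    qbinom q (k + r - 1) k * qhyp q (k + r) n =
      qbinom q (n + k) n * qhyp q r (n + k) -
        qbinom q (n + k + r - 1) n * qhyp q r k := by
  obtain ⟨s, rfl⟩ := Nat.exists_eq_add_of_le hr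
  rw [show k + (1 + s) - 1 = k + s from by omega,
    show n + k + (1 + s) - 1 = n + k + s from by omega,
    show k + (1 + s) = (k + s) + 1 from by omega,
    show (1 + s : ℕ) = s + 1 from by omega]
  rw [qhyp_closed hq hq1 (k + s) n, qhyp_closed hq hq1 s (n + k), qhyp_closed hq hq1 s k]
  rw [show n + (k + s) = n + k + s from by omega]
  have h := qbinom_prod hq hq1 n k s
  linear_combination (qhyp q 1 s - qhyp q 1 (n + k + s)) * h
end

section
/- Define rational numbers $A_2(p,r,n)$ and $B_2(p,r,n)$ for integers $p \ge 0$, $r \ge 1$, $n \ge 0$ by $A_2(0,r,n) = n/r$, $B_2(0,r,n) = \frac{1}{r}\binom{n+r-1}{r}$, and for $p \ge 1$: $A_2(p,r,n) = A_2(0,r,n)\bigl(1 + \sum_{j=0}^{p-1} \binom{p}{j} A_2(j, r+1, n-1)\bigr)$ and $B_2(p,r,n) = B_2(0,r,n)\bigl(1 + \sum_{j=0}^{p-1} \binom{p}{j} A_2(j, r+1, n-1)\bigr) + \sum_{j=0}^{p-1} \binom{p}{j} B_2(j, r+1, n-1)$. Then for all positive integers $n$, $p$, $r$, $\sum_{\ell=1}^{n}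 \ell^{p} H_{n-\ell}^{(r)} = A_2(p,r,n) H_n^{(r)} - B_2(p,r,n)$. -/
/-- The harmonic number `H_n = ∑_{j=1}^n 1/j`. -/
noncomputable def harm (n : ℕ) : ℝ := ∑ j ∈ Finset.Icc 1 n, (1 : ℝ) / j

/-- The hyperharmonic numbers: `H_n^{(1)} = H_n` and
`H_n^{(r)} = ∑_{ℓ=1}^n H_ℓ^{(r-1)}` for `r ≥ 2` (so `H_0^{(r)} = 0`). -/
noncomputable def hyp : ℕ → ℕ → ℝ
  | 0, _ => 0
  | 1, n => harm n
  | r + 2, n => ∑ ℓ ∈ Finset.Icc 1 n, hyp (r + 1) ℓ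

/-- The rising factorial `(x)^{(m)} = x (x+1) ⋯ (x+m-1)`, with `(x)^{(0)} = 1`. -/
noncomputable def rise (x : ℝ) (m : ℕ) : ℝ := ∏ i ∈ Finset.range m, (x + i)

/-- `A_2(p,r,n)`, defined by `A_2(0,r,n) = n/r` and, for `p ≥ 1`,
`A_2(p,r,n) = A_2(0,r,n) (1 + ∑_{j=0}^{p-1} C(p,j) A_2(j, r+1, n-1))`. -/
noncomputable def A2 : ℕ → ℕ → ℕ → ℝ
  | 0, r, n => (n : ℝ) / r
  | p + 1, r, n => ((n : ℝ) / r) *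
      (1 + ∑ j ∈ (Finset.range (p + 1)).attach,
        ((p + 1).choose j.1 : ℝ) * A2 j.1 (r + 1) (n - 1))
  termination_by p _ _ => p
  decreasing_by exact Finset.mem_range.mp j.2

/-- `B_2(p,r,n)`, defined by `B_2(0,r,n) = C(n+r-1, r)/r` and, for `p ≥ 1`,
`B_2(p,r,n) = B_2(0,r,n) (1 + ∑_{j=0}^{p-1} C(p,j) A_2(j, r+1, n-1))
   + ∑_{j=0}^{p-1} C(p,j) B_2(j, r+1, n-1)`. -/
noncomputable def B2 : ℕ → ℕ → ℕ → ℝ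
  | 0, r, n => ((n + r - 1).choose r : ℝ) / r
  | p + 1, r, n => (((n + r - 1).choose r : ℝ) / r) *
      (1 + ∑ j ∈ (Finset.range (p + 1)).attach,
        ((p + 1).choose j.1 : ℝ) * A2 j.1 (r + 1) (n - 1)) +
      ∑ j ∈ (Finset.range (p + 1)).attach,
        ((p + 1).choose j.1 : ℝ) * B2 j.1 (r + 1) (n - 1)
  termination_by p _ _ => p
  decreasing_by exact Finset.mem_range.mp j.2
open Finset

lemma icc_to_range (f : ℕ → ℝ) (n : ℕ) :
    ∑ ℓ ∈ Icc 1 n, f ℓ = ∑ i ∈ range n, f (i + 1) := by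
  rw [← Finset.Ico_add_one_right_eq_Icc, Finset.sum_Ico_eq_sum_range]
  simp [Nat.add_comm]

lemma harm_succ (n : ℕ) : harm (n + 1) = harm n + 1 / (n + 1) := by
  unfold harm
  rw [← Finset.Ico_add_one_right_eq_Icc, ← Finset.Ico_add_one_right_eq_Icc, Finset.sum_Ico_succ_top (by omega)]
  push_cast; ring

lemma hyp_zero (r : ℕ) : hyp r 0 = 0 := by
  match r with
  | 0 => rfl
  | 1 => show harm 0 = 0; simp [harm]
  | r + 2 => show ∑ ℓ ∈ Icc 1 0, hyp (r+1) ℓ = 0; simp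

lemma hyp_step (r n : ℕ) (hr : 1 ≤ r) : hyp (r + 1) (n + 1) = hyp (r + 1) n + hyp r (n + 1) := by
  obtain ⟨s, rfl⟩ : ∃ s, r = s + 1 := ⟨r - 1, by omega⟩
  show ∑ ℓ ∈ Icc 1 (n+1), hyp (s+1) ℓ = (∑ ℓ ∈ Icc 1 n, hyp (s+1) ℓ) + hyp (s+1) (n+1)
  rw [← Finset.Ico_add_one_right_eq_Icc, ← Finset.Ico_add_one_right_eq_Icc, Finset.sum_Ico_succ_top (by omega)]

lemma hyp_one (r : ℕ) (hr : 1 ≤ r) : hyp r 1 = 1 := by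
  induction r with
  | zero => omega
  | succ s ih =>
    rcases Nat.eq_or_lt_of_le hr with h | h
    · obtain rfl : s = 0 := by omega
      show harm 1 = 1
      simp [harm]
    · rw [hyp_step s 0 (by omega), hyp_zero, zero_add, ih (by omega)]

lemma keyK : ∀ r n : ℕ, ((n:ℝ)+1) * hyp (r+1) (n+1) - ((n:ℝ)+r+1) * hyp (r+1) n
    = ((n+r).choose r : ℝ) := by
  intro r
  induction r with
  | zero =>
    intro n
    simp only [Nat.cast_zero, Nat.add_zero, Nat.choose_zero_right, Nat.cast_one, add_zero]
    show ((n:ℝ)+1) * harm (n+1) - ((n:ℝ)+1) * harm n = 1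
    rw [harm_succ]
    have : ((n:ℝ)+1) ≠ 0 := by positivity
    field_simp
    ring
  | succ s ih =>
    intro n
    induction n with
    | zero =>
      simp [hyp_zero, hyp_one (s+2) (by omega)]
    | succ m ihm =>
      have h1 := hyp_step (s+1) (m+1) (by omega)
      have h2 := hyp_step (s+1) m (by omega)
      have h3 := ih (m+1)
      have hp : ((m+1+s).choose s : ℝ) + ((m+1+s).choose (s+1) : ℝ)
          = ((m+1+s+1).choose (s+1) : ℝ) := by
        rw [← Nat.cast_add, ← Nat.choose_succ_succ]
      rw [show m + (s+1) = m+1+s from by ring] at ihm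
      rw [h2] at ihm
      rw [h1, h2]
      rw [show m + 1 + (s+1) = m+1+s+1 from by ring]
      push_cast at ihm h3 ⊢
      linear_combination ihm + h3 + hp

lemma SB (s : ℕ) : ∀ n : ℕ, ∑ k ∈ range n, hyp (s+1) k
    = ((n:ℝ)/(s+1)) * hyp (s+1) n - ((n+s).choose (s+1) : ℝ)/(s+1) := by
  intro n
  induction n with
  | zero => simp [Nat.choose_eq_zero_of_lt (by omega : s < s+1)]
  | succ m ih =>
    rw [Finset.sum_range_succ, ih]
    have hk := keyK s m
    have hp : ((m+s).choose s : ℝ) + ((m+s).choose (s+1) : ℝ)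
        = ((m+s+1).choose (s+1) : ℝ) := by
      rw [← Nat.cast_add, ← Nat.choose_succ_succ]
    rw [show m + 1 + s = m+s+1 from by ring]
    have hs : ((s:ℝ)+1) ≠ 0 := by positivity
    push_cast at hk hp ⊢
    field_simp
    linear_combination -hk - hp
lemma A2_zero_eq (r n : ℕ) : A2 0 r n = (n : ℝ) / r := by rw [A2]

lemma A2_succ (p r n : ℕ) : A2 (p+1) r n = ((n : ℝ) / r) *
    (1 + ∑ j ∈ range (p + 1), ((p + 1).choose j : ℝ) * A2 j (r + 1) (n - 1)) := by
  rw [A2]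
  congr 2
  exact Finset.sum_attach _ fun j => ((p + 1).choose j : ℝ) * A2 j (r + 1) (n - 1)

lemma B2_zero_eq (r n : ℕ) : B2 0 r n = ((n + r - 1).choose r : ℝ) / r := by rw [B2]

lemma B2_succ (p r n : ℕ) : B2 (p+1) r n = (((n + r - 1).choose r : ℝ) / r) *
    (1 + ∑ j ∈ range (p + 1), ((p + 1).choose j : ℝ) * A2 j (r + 1) (n - 1)) +
    ∑ j ∈ range (p + 1), ((p + 1).choose j : ℝ) * B2 j (r + 1) (n - 1) := by
  rw [B2]
  rw [Finset.sum_attach _ fun j => ((p + 1).choose j : ℝ) * A2 j (r + 1) (n - 1)]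
  rw [Finset.sum_attach _ fun j => ((p + 1).choose j : ℝ) * B2 j (r + 1) (n - 1)]

lemma A2_zero_n (p r : ℕ) : A2 p r 0 = 0 := by
  cases p with
  | zero => rw [A2_zero_eq]; simp
  | succ p => rw [A2_succ]; simp

lemma B2_choose_zero (r : ℕ) : ((0 + r - 1).choose r : ℝ) / r = 0 := by
  rcases r with _ | s
  · simp
  · rw [show 0 + (s+1) - 1 = s from by omega, Nat.choose_eq_zero_of_lt (by omega)]
    simp

lemma B2_zero_n : ∀ p r : ℕ, B2 p r 0 = 0 := by
  intro p
  induction p using Nat.strong_induction_on with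
  | _ p ih =>
    intro r
    cases p with
    | zero => rw [B2_zero_eq]; exact B2_choose_zero r
    | succ p =>
      rw [B2_succ, B2_choose_zero, zero_mul, zero_add]
      refine Finset.sum_eq_zero fun j hj => ?_
      rw [show (0:ℕ) - 1 = 0 from rfl, ih j (Finset.mem_range.mp hj)]
      ring

lemma pow_diff (p : ℕ) (x : ℝ) :
    (x + 1) ^ (p + 1) - x ^ (p + 1)
      = ∑ j ∈ range (p + 1), ((p + 1).choose j : ℝ) * x ^ j := by
  rw [add_pow, Finset.sum_range_succ]
  simp only [one_pow, Nat.choose_self, Nat.cast_one, mul_one, Nat.sub_self, pow_zero]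
  rw [add_sub_cancel_right]
  exact Finset.sum_congr rfl fun k _ => by ring

lemma hyp_as_sub (r k : ℕ) (hr : 1 ≤ r) : hyp r k = hyp (r+1) k - hyp (r+1) (k-1) := by
  cases k with
  | zero => simp [hyp_zero]
  | succ k => rw [Nat.add_sub_cancel, hyp_step r k hr]; ring

lemma hyp_prev (s m : ℕ) : hyp (s+1+1) m
    = ((m:ℝ)+1)/(s+1) * hyp (s+1) (m+1) - ((m+1+s).choose (s+1) : ℝ)/(s+1) := by
  have h1 : hyp (s+2) m = ∑ i ∈ range m, hyp (s+1) (i+1) := by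
    show (∑ ℓ ∈ Icc 1 m, hyp (s+1) ℓ) = _
    rw [icc_to_range]
  have h2 : ∑ k ∈ range (m+1), hyp (s+1) k
      = (∑ i ∈ range m, hyp (s+1) (i+1)) + hyp (s+1) 0 := Finset.sum_range_succ' _ _
  have h3 := SB s (m+1)
  rw [hyp_zero, add_zero] at h2
  rw [h1, ← h2, h3]
  push_cast
  ring
lemma main : ∀ p r n : ℕ, 1 ≤ r →
    ∑ i ∈ range n, ((i:ℝ)+1)^p * hyp r (n-1-i) = A2 p r n * hyp r n - B2 p r n := by
  intro p
  induction p using Nat.strong_induction_on with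
  | _ p ih =>
    intro r n hr
    obtain ⟨s, rfl⟩ : ∃ s, r = s + 1 := ⟨r - 1, by omega⟩
    cases p with
    | zero =>
      simp only [pow_zero, one_mul]
      rw [Finset.sum_range_reflect (fun k => hyp (s+1) k) n]
      rw [A2_zero_eq, B2_zero_eq, show n + (s+1) - 1 = n + s from by omega]
      push_cast
      exact SB s n
    | succ p =>
      cases n with
      | zero => simp [hyp_zero, B2_zero_n, A2_zero_n]
      | succ m =>
        have e1 : ∑ i ∈ range (m+1), ((i:ℝ)+1)^(p+1) * hyp (s+1) (m+1-1-i)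
            = (∑ i ∈ range (m+1), ((i:ℝ)+1)^(p+1) * hyp (s+1+1) (m-i))
              - ∑ i ∈ range (m+1), ((i:ℝ)+1)^(p+1) * hyp (s+1+1) (m-i-1) := by
          rw [← Finset.sum_sub_distrib]
          refine Finset.sum_congr rfl fun i _ => ?_
          rw [show m+1-1-i = m - i from by omega, hyp_as_sub (s+1) (m-i) (by omega)]
          ring
        have e2 : ∑ i ∈ range (m+1), ((i:ℝ)+1)^(p+1) * hyp (s+1+1) (m-i-1)
            = ∑ i ∈ range m, ((i:ℝ)+1)^(p+1) * hyp (s+1+1) (m-1-i) := by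
          rw [Finset.sum_range_succ, show m - m - 1 = 0 from by omega, hyp_zero, mul_zero,
            add_zero]
          exact Finset.sum_congr rfl fun i _ => by
            rw [show m - i - 1 = m - 1 - i from by omega]
        have e3 : ∑ i ∈ range (m+1), ((i:ℝ)+1)^(p+1) * hyp (s+1+1) (m-i)
            = (∑ i ∈ range m, ((i:ℝ)+1+1)^(p+1) * hyp (s+1+1) (m-1-i)) + hyp (s+1+1) m := by
          rw [Finset.sum_range_succ']
          congr 1
          · refine Finset.sum_congr rfl fun i _ => ?_
            rw [show m - (i+1) = m - 1 - i from by omega]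
            push_cast
            ring
          · norm_num
        have e5 : (∑ i ∈ range m, ((i:ℝ)+1+1)^(p+1) * hyp (s+1+1) (m-1-i))
              - ∑ i ∈ range m, ((i:ℝ)+1)^(p+1) * hyp (s+1+1) (m-1-i)
            = ∑ j ∈ range (p+1), ((p+1).choose j : ℝ) *
                ∑ i ∈ range m, ((i:ℝ)+1)^j * hyp (s+1+1) (m-1-i) := by
          rw [← Finset.sum_sub_distrib]
          have hterm : ∀ i ∈ range m,
              ((i:ℝ)+1+1)^(p+1) * hyp (s+1+1) (m-1-i) - ((i:ℝ)+1)^(p+1) * hyp (s+1+1) (m-1-i)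
              = ∑ j ∈ range (p+1), ((p+1).choose j : ℝ) *
                  (((i:ℝ)+1)^j * hyp (s+1+1) (m-1-i)) := by
            intro i _
            rw [← sub_mul, pow_diff p ((i:ℝ)+1), Finset.sum_mul]
            exact Finset.sum_congr rfl fun j _ => by ring
          rw [Finset.sum_congr rfl hterm, Finset.sum_comm]
          exact Finset.sum_congr rfl fun j _ => by rw [← Finset.mul_sum]
        have e6 : ∀ j ∈ range (p+1),
            ((p+1).choose j : ℝ) * ∑ i ∈ range m, ((i:ℝ)+1)^j * hyp (s+1+1) (m-1-i)
              = ((p+1).choose j : ℝ) *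
                  (A2 j (s+1+1) m * hyp (s+1+1) m - B2 j (s+1+1) m) := fun j hj => by
          rw [ih j (Finset.mem_range.mp hj) (s+1+1) m (by omega)]
        have split : ∑ j ∈ range (p+1), ((p+1).choose j:ℝ) *
              (A2 j (s+1+1) m * hyp (s+1+1) m - B2 j (s+1+1) m)
            = (∑ j ∈ range (p+1), ((p+1).choose j:ℝ) * A2 j (s+1+1) m) * hyp (s+1+1) m
              - ∑ j ∈ range (p+1), ((p+1).choose j:ℝ) * B2 j (s+1+1) m := by
          rw [Finset.sum_mul, ← Finset.sum_sub_distrib]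
          exact Finset.sum_congr rfl fun j _ => by ring
        rw [e1, e2, e3]
        rw [show (∑ i ∈ range m, ((i:ℝ)+1+1)^(p+1) * hyp (s+1+1) (m-1-i)) + hyp (s+1+1) m
              - ∑ i ∈ range m, ((i:ℝ)+1)^(p+1) * hyp (s+1+1) (m-1-i)
            = hyp (s+1+1) m + ((∑ i ∈ range m, ((i:ℝ)+1+1)^(p+1) * hyp (s+1+1) (m-1-i))
              - ∑ i ∈ range m, ((i:ℝ)+1)^(p+1) * hyp (s+1+1) (m-1-i)) from by ring]
        rw [e5, Finset.sum_congr rfl e6, split]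
        rw [A2_succ, B2_succ, Nat.add_sub_cancel,
          show m+1+(s+1)-1 = m+1+s from by omega]
        rw [hyp_prev s m]
        push_cast
        ring
/-- For positive integers `n, p, r`,
`∑_{ℓ=1}^n ℓ^p H_{n-ℓ}^{(r)} = A_2(p,r,n) H_n^{(r)} - B_2(p,r,n)`. -/
theorem sum_backward_pow_mul_hyp (n p r : ℕ) (hn : 1 ≤ n) (hp : 1 ≤ p) (hr : 1 ≤ r) :
    ∑ ℓ ∈ Finset.Icc 1 n, (ℓ : ℝ) ^ p * hyp r (n - ℓ) =
      A2 p r n * hyp r n - B2 p r n := by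
  rw [icc_to_range (fun ℓ => (ℓ:ℝ)^p * hyp r (n-ℓ)) n]
  rw [← main p r n hr]
  refine Finset.sum_congr rfl fun i _ => ?_
  rw [show n - (i+1) = n - 1 - i from by omega]
  push_cast
  ring
end
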